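/- Let P ∈ F_{q^r}[X,σ] be monic of degree d with nonzero constant coefficient, and let φ be the σ-semilinear map on F_{q^r}^d whose matrix is the companion matrix of P, with e_0 the first standard basis vector. Let π ∈ F_q[Y] be the minimal polynomial of the F_{q^r}-linear map φ^r. Then π(X^r) is the monic polynomial of least degree in the center F_q[X^r] of F_{q^r}[X,σ] that is right-divisible by P. -/

import Mathlib

/-- Multiplication in the skew polynomial ring `F[X,σ]` with `σ x = x ^ q`, so that
`X * a = a ^ q * X`. -/
noncomputable def skewMul {K : Type*} [Field K] (q : ℕ) (P Q : Polynomial K) : Polynomial K :=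
  ∑ i ∈ P.support, ∑ j ∈ Q.support,
    Polynomial.C (P.coeff i * Q.coeff j ^ q ^ i) * Polynomial.X ^ (i + j)

/-- `A` right-divides `B` in `F[X,σ]`: `B = C ⬝ A` for some `C`. -/
def SkewRightDvd {K : Type*} [Field K] (q : ℕ) (A B : Polynomial K) : Prop :=
  ∃ C : Polynomial K, B = skewMul q C A

/-- A skew polynomial lies in the center `F_q[X^r]` of `F_{q^r}[X,σ]`: all its nonzero
coefficients sit in degrees divisible by `r` and are fixed by the `q`-power Frobenius. -/
def IsCentralSkew {K : Type*} [Field K] (q r : ℕ) (Q : Polynomial K) : Prop :=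
  ∀ n : ℕ, Q.coeff n ≠ 0 → r ∣ n ∧ Q.coeff n ^ q = Q.coeff n

section SkewAux

open Polynomial Finset

variable {K : Type*} [Field K] (q : ℕ)

lemma skewMul_eq_sum_subset (A B : K[X]) {s : Finset ℕ} (hs : A.support ⊆ s) :
    skewMul q A B = ∑ i ∈ s, ∑ j ∈ B.support,
      C (A.coeff i * B.coeff j ^ q ^ i) * X ^ (i + j) := by
  unfold skewMul
  refine Finset.sum_subset hs (fun i _ hi => ?_)
  simp [Polynomial.notMem_support_iff.mp hi]

lemma skewMul_zero_left (B : K[X]) : skewMul q 0 B = 0 := by simp [skewMul]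

lemma skewMul_add_left (A₁ A₂ B : K[X]) :
    skewMul q (A₁ + A₂) B = skewMul q A₁ B + skewMul q A₂ B := by
  rw [skewMul_eq_sum_subset q (A₁ + A₂) B (Polynomial.support_add),
      skewMul_eq_sum_subset q A₁ B (Finset.subset_union_left (s₂ := A₂.support)),
      skewMul_eq_sum_subset q A₂ B (Finset.subset_union_right (s₁ := A₁.support)),
      ← Finset.sum_add_distrib]
  refine Finset.sum_congr rfl fun i _ => ?_
  rw [← Finset.sum_add_distrib]
  refine Finset.sum_congr rfl fun j _ => ?_
  rw [coeff_add, add_mul, map_add, add_mul]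

lemma skewMul_monomial_left (a : K) (k : ℕ) (B : K[X]) :
    skewMul q (C a * X ^ k) B = ∑ j ∈ B.support,
      C (a * B.coeff j ^ q ^ k) * X ^ (k + j) := by
  rw [skewMul_eq_sum_subset q _ B (support_C_mul_X_pow' k a), Finset.sum_singleton]
  simp [coeff_C_mul, coeff_X_pow]

lemma skewMul_monomial_coeff (hq0 : 0 < q) (a : K) (k : ℕ) (B : K[X]) {n : ℕ} (hkn : k ≤ n) :
    (skewMul q (C a * X ^ k) B).coeff n = a * B.coeff (n - k) ^ q ^ k := by
  rw [skewMul_monomial_left, Polynomial.finset_sum_coeff]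
  simp_rw [coeff_C_mul, coeff_X_pow, mul_ite, mul_one, mul_zero]
  have h : ∀ j : ℕ, (n = k + j) = (j = n - k) := fun j => by
    apply propext; omega
  simp_rw [h]
  rw [Finset.sum_ite_eq' B.support (n - k) (fun j => a * B.coeff j ^ q ^ k)]
  split_ifs with hmem
  · rfl
  · rw [Polynomial.notMem_support_iff.mp hmem, zero_pow (pow_ne_zero _ hq0.ne'), mul_zero]

lemma natDegree_skewMul_monomial_le (a : K) (k : ℕ) (B : K[X]) :
    (skewMul q (C a * X ^ k) B).natDegree ≤ k + B.natDegree := by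
  rw [skewMul_monomial_left]
  refine Polynomial.natDegree_sum_le_of_forall_le _ _ fun j hj => ?_
  exact (Polynomial.natDegree_C_mul_X_pow_le _ _).trans
    (by have := Polynomial.le_natDegree_of_mem_supp j hj; omega)

lemma skew_div (hq0 : 0 < q) {P : K[X]} (hP : P.Monic) (hd : 0 < P.natDegree) (B : K[X]) :
    ∃ C R : K[X], B = skewMul q C P + R ∧ R.natDegree < P.natDegree := by
  suffices H : ∀ (N : ℕ) (B : K[X]), B.natDegree ≤ N → ∃ C R : K[X],
      B = skewMul q C P + R ∧ R.natDegree < P.natDegree from H B.natDegree B le_rfl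
  intro N
  induction N with
  | zero =>
      intro B hB
      exact ⟨0, B, by rw [skewMul_zero_left, zero_add], by omega⟩
  | succ N ih =>
      intro B hB
      by_cases hsmall : B.natDegree < P.natDegree
      · exact ⟨0, B, by rw [skewMul_zero_left, zero_add], hsmall⟩
      push_neg at hsmall
      set k := B.natDegree - P.natDegree with hk
      set M := skewMul q (C B.leadingCoeff * X ^ k) P with hM
      have hMcoeff : M.coeff B.natDegree = B.leadingCoeff := by
        rw [hM, skewMul_monomial_coeff q hq0 _ _ _ (by omega)]
        have : B.natDegree - k = P.natDegree := by omega
        rw [this, hP.coeff_natDegree, one_pow, mul_one]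
      have hMdeg : M.natDegree ≤ B.natDegree := by
        refine (natDegree_skewMul_monomial_le q _ _ _).trans (by omega)
      have key : ∀ m, B.natDegree ≤ m → (B - M).coeff m = 0 := by
        intro m hm
        rcases eq_or_lt_of_le hm with h | h
        · rw [coeff_sub, ← h, hMcoeff, Polynomial.coeff_natDegree, sub_self]
        · rw [coeff_sub, Polynomial.coeff_eq_zero_of_natDegree_lt h,
            Polynomial.coeff_eq_zero_of_natDegree_lt (lt_of_le_of_lt hMdeg h), sub_self]
      have hlt : (B - M).natDegree < B.natDegree := by
        rcases eq_or_ne (B - M) 0 with h0 | h0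
        · rw [h0, Polynomial.natDegree_zero]; omega
        · by_contra hcon
          push_neg at hcon
          exact Polynomial.leadingCoeff_ne_zero.mpr h0 (key _ hcon)
      obtain ⟨C', R, hCR, hR⟩ := ih (B - M) (by omega)
      refine ⟨C B.leadingCoeff * X ^ k + C', R, ?_, hR⟩
      rw [skewMul_add_left, ← hM, add_assoc, ← hCR]
      ring

end SkewAux

section ActAux

open Polynomial Finset

variable {K : Type*} [Field K] {D : Type*} [AddCommGroup D] [Module K D]

/-- Action of a skew polynomial on `D` via the semilinear map `φ`. -/
noncomputable def skewAct (φ : D → D) (A : K[X]) (v : D) : D :=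
  A.sum fun n s => s • φ^[n] v

variable {q : ℕ} {φ : D → D}

section
variable (hadd : ∀ u v : D, φ (u + v) = φ u + φ v)

include hadd

lemma phi_zero : φ 0 = 0 := by
  have h := hadd 0 0
  rw [add_zero] at h
  have h2 := add_right_cancel (a := φ 0) (b := φ 0) (c := 0)
  apply h2
  rw [← h, zero_add]

lemma phi_iter_add (n : ℕ) (u v : D) : φ^[n] (u + v) = φ^[n] u + φ^[n] v := by
  induction n with
  | zero => simp
  | succ n ih => rw [Function.iterate_succ_apply', Function.iterate_succ_apply',
      Function.iterate_succ_apply', ih, hadd]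

lemma phi_iter_zero (n : ℕ) : φ^[n] (0 : D) = 0 := by
  induction n with
  | zero => simp
  | succ n ih => rw [Function.iterate_succ_apply', ih, phi_zero hadd]

/-- `φ^[n]` as an additive monoid hom. -/
noncomputable def phiIterHom (n : ℕ) : D →+ D :=
  AddMonoidHom.mk' (φ^[n]) (phi_iter_add hadd n)

lemma skewAct_zero_right (A : K[X]) : skewAct φ A (0 : D) = 0 := by
  rw [skewAct, Polynomial.sum_def]
  refine Finset.sum_eq_zero fun n _ => ?_
  rw [phi_iter_zero hadd, smul_zero]

end

lemma phi_iter_smul (hsemi : ∀ (s : K) (u : D), φ (s • u) = s ^ q • φ u)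
    (n : ℕ) (s : K) (u : D) : φ^[n] (s • u) = s ^ q ^ n • φ^[n] u := by
  induction n with
  | zero => simp
  | succ n ih =>
      rw [Function.iterate_succ_apply', Function.iterate_succ_apply', ih, hsemi, ← pow_mul,
        ← pow_succ]

lemma skewAct_zero_left (v : D) : skewAct φ (0 : K[X]) v = 0 := by
  simp [skewAct]

lemma skewAct_add_left (A B : K[X]) (v : D) :
    skewAct φ (A + B) v = skewAct φ A v + skewAct φ B v := by
  unfold skewAct
  exact Polynomial.sum_add_index A B _ (by simp) (fun n a b => add_smul a b _)

/-- `skewAct φ · v` as an additive monoid hom in the polynomial. -/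
noncomputable def skewActHom (φ : D → D) (v : D) : K[X] →+ D :=
  AddMonoidHom.mk' (fun A => skewAct φ A v) (fun A B => skewAct_add_left A B v)

lemma skewAct_monomial (a : K) (n : ℕ) (v : D) :
    skewAct φ (Polynomial.C a * X ^ n) v = a • φ^[n] v := by
  rw [Polynomial.C_mul_X_pow_eq_monomial]
  unfold skewAct
  exact Polynomial.sum_monomial_index a (fun k s => s • φ^[k] v) (zero_smul K _)

lemma skewAct_skewMul (hadd : ∀ u v : D, φ (u + v) = φ u + φ v)
    (hsemi : ∀ (s : K) (u : D), φ (s • u) = s ^ q • φ u)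
    (A B : K[X]) (v : D) :
    skewAct φ (skewMul q A B) v = skewAct φ A (skewAct φ B v) := by
  have hL : skewAct φ (skewMul q A B) v
      = ∑ i ∈ A.support, ∑ j ∈ B.support,
          (A.coeff i * B.coeff j ^ q ^ i) • φ^[i + j] v := by
    show skewActHom φ v (skewMul q A B) = _
    unfold skewMul
    rw [map_sum]
    refine Finset.sum_congr rfl fun i _ => ?_
    rw [map_sum]
    exact Finset.sum_congr rfl fun j _ => skewAct_monomial _ _ _
  rw [hL]
  unfold skewAct
  rw [Polynomial.sum_def, Polynomial.sum_def]
  refine Finset.sum_congr rfl fun i _ => ?_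
  have hsum : φ^[i] (∑ j ∈ B.support, B.coeff j • φ^[j] v)
      = ∑ j ∈ B.support, φ^[i] (B.coeff j • φ^[j] v) :=
    map_sum (phiIterHom hadd i) _ _
  rw [hsum, Finset.smul_sum]
  refine Finset.sum_congr rfl fun j _ => ?_
  rw [phi_iter_smul hsemi, smul_smul, ← Function.iterate_add_apply]

end ActAux

open Polynomial Finset in
/-- Let `P = X^d − Σ cᵢ Xⁱ ∈ F_{q^r}[X,σ]` be monic of degree `d` with
nonzero constant coefficient, `φ` the `σ`-semilinear map with matrix the companion matrix
of `P` (in the basis `e`, with `e₀` the first basis vector), and `π ∈ F_q[Y]` the minimal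
polynomial of the `F_{q^r}`-linear map `ψ = φ^r`. Then `π(X^r)` is the monic central
polynomial of least degree that is right-divisible by `P` (the optimal bound of `P`). -/
theorem optimal_bound
    (p a q r : ℕ) (hp : p.Prime) (ha : 0 < a) (hq : q = p ^ a) (hr : 0 < r)
    (F : Type*) [Field F] [Fintype F] [CharP F p] (hF : Fintype.card F = q ^ r)
    (d : ℕ) (hd : 0 < d) (c : Fin d → F) (hc0 : c ⟨0, hd⟩ ≠ 0)
    (D : Type*) [AddCommGroup D] [Module F D]
    (e : Module.Basis (Fin d) F D)
    (φ : D → D) (hadd : ∀ u v : D, φ (u + v) = φ u + φ v)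
    (hsemi : ∀ (s : F) (u : D), φ (s • u) = s ^ q • φ u)
    (hstep : ∀ (i : Fin d) (h : (i : ℕ) + 1 < d), φ (e i) = e ⟨(i : ℕ) + 1, h⟩)
    (hlast : φ (e ⟨d - 1, by omega⟩) = ∑ i : Fin d, c i • e i)
    (ψ : Module.End F D) (hψ : ∀ u : D, ψ u = φ^[r] u) :
    ((minpoly F ψ).comp (Polynomial.X ^ r)).Monic ∧
    IsCentralSkew q r ((minpoly F ψ).comp (Polynomial.X ^ r)) ∧
    SkewRightDvd q (Polynomial.X ^ d - ∑ i : Fin d, Polynomial.C (c i) * Polynomial.X ^ (i : ℕ))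
      ((minpoly F ψ).comp (Polynomial.X ^ r)) ∧
    ∀ Q : Polynomial F, Q ≠ 0 → IsCentralSkew q r Q →
      SkewRightDvd q (Polynomial.X ^ d - ∑ i : Fin d, Polynomial.C (c i) * Polynomial.X ^ (i : ℕ)) Q →
      ((minpoly F ψ).comp (Polynomial.X ^ r)).natDegree ≤ Q.natDegree := by
  classical
  have hq0 : 0 < q := by rw [hq]; exact pow_pos hp.pos a
  haveI : Fact p.Prime := ⟨hp⟩
  haveI : Module.Finite F D := Module.Finite.of_basis e
  set π : Polynomial F := minpoly F ψ with hπdef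
  have hint : IsIntegral F ψ := Algebra.IsIntegral.isIntegral ψ
  have hπmonic : π.Monic := minpoly.monic hint
  have hπ0 : π ≠ 0 := hπmonic.ne_zero
  set e0 : D := e ⟨0, hd⟩ with he0
  -- iterate of φ on e0 gives the basis
  have hiter : ∀ (i : ℕ) (h : i < d), φ^[i] e0 = e ⟨i, h⟩ := by
    intro i
    induction i with
    | zero => intro h; simp [he0]
    | succ i ih =>
        intro h
        rw [Function.iterate_succ_apply', ih (by omega), hstep ⟨i, by omega⟩ h]
  set P : Polynomial F := X ^ d - ∑ i : Fin d, C (c i) * X ^ (i : ℕ) with hPdef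
  set S : Polynomial F := ∑ i : Fin d, C (c i) * X ^ (i : ℕ) with hSdef
  have hSnat : S.natDegree ≤ d - 1 := by
    refine Polynomial.natDegree_sum_le_of_forall_le _ _ fun i _ => ?_
    exact (Polynomial.natDegree_C_mul_X_pow_le _ _).trans (by omega)
  have hSdeg : S.degree < (d : ℕ) := by
    refine lt_of_le_of_lt Polynomial.degree_le_natDegree ?_
    exact_mod_cast (by omega : S.natDegree < d)
  have hPmonic : P.Monic := Polynomial.monic_X_pow_sub hSdeg
  have hPdeg : P.natDegree = d := by
    rw [hPdef, Polynomial.natDegree_sub_eq_left_of_natDegree_lt, Polynomial.natDegree_X_pow]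
    rw [Polynomial.natDegree_X_pow]
    omega
  -- action of P on e0 is zero
  have hPe0 : skewAct φ P e0 = 0 := by
    have h1 : skewAct φ ((X : Polynomial F) ^ d) e0 = φ^[d] e0 := by
      have := skewAct_monomial (φ := φ) (1 : F) d e0
      rwa [Polynomial.C_1, one_mul, one_smul] at this
    have h2 : φ^[d] e0 = ∑ i : Fin d, c i • e i := by
      have hd1 : d = (d - 1) + 1 := by omega
      conv_lhs => rw [hd1]
      rw [Function.iterate_succ_apply', hiter (d - 1) (by omega)]
      exact hlast
    have h3 : skewAct φ S e0 = ∑ i : Fin d, c i • e i := by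
      show skewActHom φ e0 S = _
      rw [hSdef, map_sum]
      refine Finset.sum_congr rfl fun i _ => ?_
      show skewAct φ _ e0 = _
      rw [skewAct_monomial, hiter i i.isLt, Fin.eta]
    have h4 : skewAct φ P e0 = skewAct φ ((X : Polynomial F) ^ d) e0 - skewAct φ S e0 :=
      map_sub (skewActHom φ e0) _ _
    rw [h4, h1, h2, h3, sub_self]
  -- surjectivity of φ
  have hfrobsurj : Function.Surjective (fun x : F => x ^ q) := by
    have hfn : (fun x : F => x ^ q) = (iterateFrobenius F p a : F → F) := by
      funext x; rw [iterateFrobenius_def, hq]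
    rw [hfn]
    exact Finite.injective_iff_surjective.mp (iterateFrobenius F p a).injective
  set Sub : Submodule F D :=
    { carrier := Set.range φ
      add_mem' := by rintro _ _ ⟨u, rfl⟩ ⟨v, rfl⟩; exact ⟨u + v, hadd u v⟩
      zero_mem' := ⟨0, phi_zero hadd⟩
      smul_mem' := by
        rintro s _ ⟨u, rfl⟩
        obtain ⟨t, ht⟩ := hfrobsurj s
        exact ⟨t • u, by rw [hsemi]; rw [show t ^ q = s from ht]⟩ } with hSub
  have hpos_mem : ∀ (i : ℕ) (h : i < d), 0 < i → e ⟨i, h⟩ ∈ Sub := by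
    intro i h hi
    obtain ⟨j, rfl⟩ : ∃ j, i = j + 1 := ⟨i - 1, by omega⟩
    refine ⟨φ^[j] e0, ?_⟩
    rw [← Function.iterate_succ_apply' φ j e0, hiter (j + 1) h]
  have heS : ∀ i : Fin d, e i ∈ Sub := by
    intro i
    rcases Nat.eq_zero_or_pos (i : ℕ) with h0 | h0
    · have hie : i = ⟨0, hd⟩ := Fin.ext h0
      subst hie
      have hsum : (∑ j : Fin d, c j • e j) ∈ Sub := ⟨e ⟨d - 1, by omega⟩, hlast⟩
      have hrest : (∑ j ∈ Finset.univ.erase (⟨0, hd⟩ : Fin d), c j • e j) ∈ Sub := by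
        refine Submodule.sum_mem _ fun j hj => Submodule.smul_mem _ _ ?_
        have hj0 : 0 < (j : ℕ) := by
          have hne := Finset.ne_of_mem_erase hj
          rcases Nat.eq_zero_or_pos (j : ℕ) with h | h
          · exact absurd (Fin.ext h) hne
          · exact h
        have := hpos_mem j j.isLt hj0
        rwa [Fin.eta] at this
      have hsplit : c ⟨0, hd⟩ • e ⟨0, hd⟩ + ∑ j ∈ Finset.univ.erase (⟨0, hd⟩ : Fin d), c j • e j
          = ∑ j : Fin d, c j • e j :=
        Finset.add_sum_erase Finset.univ (fun j => c j • e j) (Finset.mem_univ (⟨0, hd⟩ : Fin d))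
      have hc0e0 : c ⟨0, hd⟩ • e ⟨0, hd⟩ ∈ Sub := by
        have : c ⟨0, hd⟩ • e ⟨0, hd⟩
            = (∑ j : Fin d, c j • e j) - ∑ j ∈ Finset.univ.erase (⟨0, hd⟩ : Fin d), c j • e j := by
          rw [← hsplit]; abel
        rw [this]
        exact Submodule.sub_mem _ hsum hrest
      have := Submodule.smul_mem Sub (c ⟨0, hd⟩)⁻¹ hc0e0
      rwa [smul_smul, inv_mul_cancel₀ hc0, one_smul] at this
    · have := hpos_mem i i.isLt h0
      rwa [Fin.eta] at this
  have hsurj : Function.Surjective φ := by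
    intro w
    have htop : Sub = ⊤ := by
      rw [eq_top_iff, ← e.span_eq]
      exact Submodule.span_le.mpr (by rintro _ ⟨i, rfl⟩; exact heS i)
    have : w ∈ Sub := by rw [htop]; trivial
    exact this
  -- powers of ψ are iterates of φ
  have hψpow : ∀ (k : ℕ) (v : D), (ψ ^ k) v = φ^[r * k] v := by
    intro k
    induction k with
    | zero => intro v; simp
    | succ k ih =>
        intro v
        rw [pow_succ, Module.End.mul_apply, hψ v, ih (φ^[r] v), ← Function.iterate_add_apply,
          (show r * k + r = r * (k + 1) by ring)]
  -- action of expanded polynomials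
  have hact_expand : ∀ (A : Polynomial F) (v : D),
      skewAct φ (Polynomial.expand F r A) v = (Polynomial.aeval ψ A) v := by
    intro A
    induction A using Polynomial.induction_on' with
    | add f g hf hg =>
        intro v
        rw [map_add, skewAct_add_left, map_add, LinearMap.add_apply, hf, hg]
    | monomial n t =>
        intro v
        rw [Polynomial.expand_monomial, ← Polynomial.C_mul_X_pow_eq_monomial, skewAct_monomial,
          Polynomial.aeval_monomial, Module.End.mul_apply, hψpow n v,
          Module.algebraMap_end_apply, mul_comm n r]
  have hcompexp : π.comp ((X : Polynomial F) ^ r) = Polynomial.expand F r π :=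
    (Polynomial.expand_eq_comp_X_pow (p := r)).symm
  -- the Frobenius twist
  set σ : F →+* F := iterateFrobenius F p a with hσdef
  have hσ : ∀ x : F, σ x = x ^ q := fun x => by rw [hσdef, iterateFrobenius_def, hq]
  have hcomm : ∀ (A : Polynomial F) (v : D),
      φ ((Polynomial.aeval ψ A) v) = (Polynomial.aeval ψ (A.map σ)) (φ v) := by
    intro A
    induction A using Polynomial.induction_on' with
    | add f g hf hg =>
        intro v
        rw [map_add, LinearMap.add_apply, hadd, hf, hg, Polynomial.map_add, map_add,
          LinearMap.add_apply]
    | monomial n t =>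
        intro v
        rw [Polynomial.map_monomial, Polynomial.aeval_monomial, Polynomial.aeval_monomial,
          Module.End.mul_apply, Module.End.mul_apply, Module.algebraMap_end_apply,
          Module.algebraMap_end_apply, hsemi, hψpow n v, hψpow n (φ v), hσ,
          ← Function.iterate_succ_apply' φ (r * n) v, Function.iterate_succ_apply φ (r * n) v]
  have hmapzero : Polynomial.aeval ψ (π.map σ) = 0 := by
    apply LinearMap.ext
    intro w
    obtain ⟨v, rfl⟩ := hsurj w
    rw [← hcomm π v, minpoly.aeval, LinearMap.zero_apply, phi_zero hadd, LinearMap.zero_apply]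
  have hfix : π.map σ = π := by
    by_contra hne
    have hδ0 : π.map σ - π ≠ 0 := sub_ne_zero.mpr hne
    have haδ : Polynomial.aeval ψ (π.map σ - π) = 0 := by
      rw [map_sub, hmapzero, minpoly.aeval, sub_zero]
    have hdvd : π ∣ (π.map σ - π) := minpoly.dvd F ψ haδ
    have hle := Polynomial.natDegree_le_of_dvd hdvd hδ0
    have hdeglt : (π.map σ - π).degree < π.degree := by
      have h1 : (π.map σ - π).degree < (π.map σ).degree := by
        refine Polynomial.degree_sub_lt (Polynomial.degree_map π σ) ?_ ?_
        · exact (hπmonic.map σ).ne_zero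
        · rw [Polynomial.leadingCoeff_map_of_injective σ.injective, hπmonic.leadingCoeff, map_one]
      rwa [Polynomial.degree_map] at h1
    have := Polynomial.natDegree_lt_natDegree hδ0 hdeglt
    omega
  have hcoe : ∀ k, π.coeff k ^ q = π.coeff k := by
    intro k
    conv_rhs => rw [← hfix]
    rw [Polynomial.coeff_map, hσ]
  -- Part 1 : monic
  have part1 : (π.comp ((X : Polynomial F) ^ r)).Monic := by
    rw [hcompexp]
    exact hπmonic.expand hr
  -- Part 2 : central
  have part2 : IsCentralSkew q r (π.comp ((X : Polynomial F) ^ r)) := by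
    intro n hn
    rw [hcompexp, Polynomial.coeff_expand hr] at hn ⊢
    by_cases hrn : r ∣ n
    · rw [if_pos hrn]
      exact ⟨hrn, hcoe _⟩
    · rw [if_neg hrn] at hn
      exact absurd rfl hn
  -- Part 3 : right divisibility
  have part3 : SkewRightDvd q P (π.comp ((X : Polynomial F) ^ r)) := by
    obtain ⟨Cp, R, hCR, hRdeg⟩ := skew_div q hq0 hPmonic (by rw [hPdeg]; exact hd)
      (π.comp ((X : Polynomial F) ^ r))
    have hacts : skewAct φ (π.comp ((X : Polynomial F) ^ r)) e0 = 0 := by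
      rw [hcompexp, hact_expand, minpoly.aeval, LinearMap.zero_apply]
    have hactR : skewAct φ R e0 = 0 := by
      rw [hCR, skewAct_add_left, skewAct_skewMul hadd hsemi, hPe0,
        skewAct_zero_right hadd, zero_add] at hacts
      exact hacts
    have hR0 : R = 0 := by
      have hsum : ∑ i : Fin d, R.coeff i • e i = 0 := by
        have h1 : skewAct φ R e0 = ∑ n ∈ Finset.range d, R.coeff n • φ^[n] e0 := by
          rw [skewAct]
          exact Polynomial.sum_over_range' R (fun n => zero_smul F (φ^[n] e0)) d (by omega)
        have h2 : ∑ i : Fin d, R.coeff i • e i = ∑ n ∈ Finset.range d, R.coeff n • φ^[n] e0 := by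
          rw [← Fin.sum_univ_eq_sum_range (fun n => R.coeff n • φ^[n] e0) d]
          refine Finset.sum_congr rfl fun i _ => ?_
          rw [hiter i i.isLt, Fin.eta]
        rw [h2, ← h1, hactR]
      have hco := Fintype.linearIndependent_iff.mp e.linearIndependent
        (fun i => R.coeff i) hsum
      apply Polynomial.ext
      intro n
      rw [Polynomial.coeff_zero]
      by_cases hn : n < d
      · exact hco ⟨n, hn⟩
      · exact Polynomial.coeff_eq_zero_of_natDegree_lt (by omega)
    exact ⟨Cp, by rw [hCR, hR0, add_zero]⟩
  -- Part 4 : minimality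
  refine ⟨part1, part2, part3, ?_⟩
  intro Q hQ0 hQc hQdvd
  obtain ⟨Cq, hCq⟩ := hQdvd
  set Qt : Polynomial F := Polynomial.contract r Q with hQtdef
  have hQexp : Polynomial.expand F r Qt = Q := by
    ext n
    rw [Polynomial.coeff_expand hr]
    split_ifs with hrn
    · rw [hQtdef, Polynomial.coeff_contract hr.ne', Nat.div_mul_cancel hrn]
    · rcases eq_or_ne (Q.coeff n) 0 with h | h
      · rw [h]
      · exact absurd (hQc n h).1 hrn
  have hQt0 : Qt ≠ 0 := fun h => hQ0 (by rw [← hQexp, h, map_zero])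
  have hactQ0 : skewAct φ Q e0 = 0 := by
    rw [hCq, skewAct_skewMul hadd hsemi, hPe0, skewAct_zero_right hadd]
  have hcommQ : ∀ v : D, skewAct φ Q (φ v) = φ (skewAct φ Q v) := by
    intro v
    have hexp : φ (skewAct φ Q v) = ∑ n ∈ Q.support, Q.coeff n ^ q • φ^[n] (φ v) := by
      calc φ (skewAct φ Q v) = φ (∑ n ∈ Q.support, Q.coeff n • φ^[n] v) := by
            rw [skewAct, Polynomial.sum_def]
        _ = ∑ n ∈ Q.support, φ (Q.coeff n • φ^[n] v) :=
            map_sum (AddMonoidHom.mk' φ hadd) _ _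
        _ = ∑ n ∈ Q.support, Q.coeff n ^ q • φ^[n] (φ v) := by
            refine Finset.sum_congr rfl fun n _ => ?_
            rw [hsemi, ← Function.iterate_succ_apply' φ n v, Function.iterate_succ_apply φ n v]
    rw [hexp, skewAct, Polynomial.sum_def]
    refine Finset.sum_congr rfl fun n hn => ?_
    rw [(hQc n (Polynomial.mem_support_iff.mp hn)).2]
  have hcommQiter : ∀ (m : ℕ) (v : D), skewAct φ Q (φ^[m] v) = φ^[m] (skewAct φ Q v) := by
    intro m
    induction m with
    | zero => intro v; simp
    | succ m ih =>
        intro v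
        rw [Function.iterate_succ_apply' φ m v, hcommQ, ih v,
          ← Function.iterate_succ_apply' φ m (skewAct φ Q v)]
  have haevalQt : Polynomial.aeval ψ Qt = 0 := by
    refine Module.Basis.ext e fun i => ?_
    rw [LinearMap.zero_apply, ← hact_expand Qt (e i), hQexp, ← hiter i i.isLt, hcommQiter,
      hactQ0, phi_iter_zero hadd]
  have hdvdQt : π ∣ Qt := minpoly.dvd F ψ haevalQt
  have h904 : π.natDegree ≤ Qt.natDegree := Polynomial.natDegree_le_of_dvd hdvdQt hQt0
  calc (π.comp ((X : Polynomial F) ^ r)).natDegree = π.natDegree * r := by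
        rw [hcompexp, Polynomial.natDegree_expand]
    _ ≤ Qt.natDegree * r := Nat.mul_le_mul_right r h904
    _ = Q.natDegree := by rw [← hQexp, Polynomial.natDegree_expand]
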